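/- A function f : F_2^n → F_2^n is a modified planar function (i.e., for every nonzero a ∈ F_2^n the map x ↦ f(x+a) + f(x) + a⊙x is a bijection of F_2^n) if and only if for every nonzero c ∈ F_2^n the component function f_c(x) = c·f(x) is c-bent₄. -/

import Mathlib

open Finset

noncomputable section

/-- Dot product on `F_2^n`. -/
def dotp {n : ℕ} (x y : Fin n → ZMod 2) : ZMod 2 := ∑ i, x i * y i

/-- Coordinatewise product on `F_2^n`. -/
def odot {n : ℕ} (x y : Fin n → ZMod 2) : Fin n → ZMod 2 := fun i => x i * y i

/-- Hamming weight of `z ∈ F_2^n`. -/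
def wt {n : ℕ} (z : Fin n → ZMod 2) : ℕ := ∑ i, (z i).val

/-- The unitary transform `U_g^c(u) = Σ_x (−1)^{g(x)+u·x} · i^{wt(c⊙x)}`. -/
def U {n : ℕ} (g : (Fin n → ZMod 2) → ZMod 2) (c u : Fin n → ZMod 2) : ℂ :=
  ∑ x : Fin n → ZMod 2, (-1 : ℂ) ^ (g x + dotp u x).val * Complex.I ^ wt (odot c x)

/-- `g` is `c`-bent₄ if `U_g^c` has a flat spectrum. -/
def IsCBent4 {n : ℕ} (g : (Fin n → ZMod 2) → ZMod 2) (c : Fin n → ZMod 2) : Prop :=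
  ∀ u : Fin n → ZMod 2, ‖U g c u‖ = (2 : ℝ) ^ ((n : ℝ) / 2)

namespace CB4

def χ (t : ZMod 2) : ℂ := (-1) ^ t.val

lemma χ_zero : χ (0 : ZMod 2) = 1 := rfl

lemma χ_add (a b : ZMod 2) : χ (a + b) = χ a * χ b := by
  rcases (by decide : ∀ t : ZMod 2, t = 0 ∨ t = 1) a with rfl | rfl <;>
  rcases (by decide : ∀ t : ZMod 2, t = 0 ∨ t = 1) b with rfl | rfl <;>
    simp [χ, ZMod.val_one, show (1+1:ZMod 2)=0 from rfl]

lemma conj_χ (t : ZMod 2) : (starRingEnd ℂ) (χ t) = χ t := by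
  fin_cases t <;> simp [χ, ZMod.val_one]

lemma χ_add_one (t : ZMod 2) : χ (t + 1) = - χ t := by
  rcases (by decide : ∀ t : ZMod 2, t = 0 ∨ t = 1) t with rfl | rfl <;>
    simp [χ, ZMod.val_one, show (1+1:ZMod 2)=0 from rfl]

lemma χ_sum {ι : Type*} (s : Finset ι) (g : ι → ZMod 2) :
    χ (∑ i ∈ s, g i) = ∏ i ∈ s, χ (g i) := by
  classical
  induction s using Finset.cons_induction with
  | empty => simp [χ_zero]
  | cons i s hi ih => rw [Finset.sum_cons, Finset.prod_cons, χ_add, ih]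

variable {n : ℕ}

lemma dotp_add_right (c x y : Fin n → ZMod 2) : dotp c (x + y) = dotp c x + dotp c y := by
  simp [dotp, mul_add, Finset.sum_add_distrib]

lemma dotp_comm (x y : Fin n → ZMod 2) : dotp x y = dotp y x := by
  simp [dotp, mul_comm]

lemma dotp_zero_left (x : Fin n → ZMod 2) : dotp 0 x = 0 := by simp [dotp]
lemma dotp_zero_right (x : Fin n → ZMod 2) : dotp x 0 = 0 := by simp [dotp]

lemma odot_zero_left (x : Fin n → ZMod 2) : odot 0 x = 0 := by
  funext i; simp [odot]

lemma wt_zero : wt (0 : Fin n → ZMod 2) = 0 := by simp [wt]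

lemma card_G : Fintype.card (Fin n → ZMod 2) = 2 ^ n := by simp

lemma orth (c : Fin n → ZMod 2) :
    ∑ x : Fin n → ZMod 2, χ (dotp c x) = if c = 0 then (2:ℂ)^n else 0 := by
  split
  · next h =>
      subst h
      simp [dotp_zero_left, χ_zero, Finset.card_univ, card_G]
  · next h =>
      obtain ⟨i, hi⟩ := Function.ne_iff.mp h
      have hci : c i = 1 := by
        have h1 : ∀ t : ZMod 2, t ≠ 0 → t = 1 := by decide
        exact h1 _ (by simpa using hi)
      set e : Fin n → ZMod 2 := Pi.single i 1 with he
      have hde : dotp c e = 1 := by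
        rw [dotp, Finset.sum_eq_single i]
        · simp [he, hci]
        · intro j _ hj; simp [he, Pi.single_eq_of_ne hj]
        · simp
      have key : ∀ x : Fin n → ZMod 2, χ (dotp c (x + e)) = - χ (dotp c x) := by
        intro x
        rw [dotp_add_right, hde, χ_add_one]
      have hre : ∑ x : Fin n → ZMod 2, χ (dotp c (x + e)) = ∑ x : Fin n → ZMod 2, χ (dotp c x) :=
        Fintype.sum_equiv (Equiv.addRight e) _ _ (fun x => rfl)
      have h2 : (∑ x : Fin n → ZMod 2, χ (dotp c x)) + ∑ x : Fin n → ZMod 2, χ (dotp c x) = 0 := by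
        nth_rewrite 1 [← hre]
        rw [← Finset.sum_add_distrib]
        simp [key]
      have := add_self_eq_zero.mp h2
      exact this


lemma Ipow_wt (z : Fin n → ZMod 2) :
    (Complex.I) ^ (wt z) = ∏ i, Complex.I ^ ((z i).val) := by
  rw [wt, Finset.prod_pow_eq_pow_sum]

lemma Ipow_bit (a b c : ZMod 2) :
    (Complex.I) ^ ((a*(b+c)).val)
      = Complex.I ^ ((a*b).val) * Complex.I ^ ((a*c).val) * χ (b*(a*c)) := by
  rcases (by decide : ∀ t : ZMod 2, t = 0 ∨ t = 1) a with rfl | rfl <;>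
  rcases (by decide : ∀ t : ZMod 2, t = 0 ∨ t = 1) b with rfl | rfl <;>
  rcases (by decide : ∀ t : ZMod 2, t = 0 ∨ t = 1) c with rfl | rfl <;>
    simp [χ, ZMod.val_one, show (1+1:ZMod 2)=0 from rfl, Complex.I_sq]

lemma quarter (c x a : Fin n → ZMod 2) :
    (Complex.I) ^ (wt (odot c (x + a)))
      = Complex.I ^ (wt (odot c x)) * Complex.I ^ (wt (odot c a)) * χ (dotp x (odot c a)) := by
  rw [Ipow_wt, Ipow_wt, Ipow_wt, dotp, χ_sum, ← Finset.prod_mul_distrib, ← Finset.prod_mul_distrib]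
  refine Finset.prod_congr rfl (fun i _ => ?_)
  have : odot c (x + a) i = c i * (x i + a i) := rfl
  rw [this]
  have h2 : odot c x i = c i * x i := rfl
  have h3 : odot c a i = c i * a i := rfl
  rw [h2, h3, Ipow_bit]

lemma IconjI : Complex.I * (starRingEnd ℂ) Complex.I = 1 := by
  simp [Complex.conj_I, Complex.I_mul_I]

-- pointwise identity
lemma point (f : (Fin n → ZMod 2) → (Fin n → ZMod 2)) (c u x a : Fin n → ZMod 2) :
    (χ (dotp c (f x) + dotp u x) * Complex.I ^ wt (odot c x)) *
      (starRingEnd ℂ) (χ (dotp c (f (x+a)) + dotp u (x+a)) * Complex.I ^ wt (odot c (x+a)))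
    = χ (dotp u a) * (starRingEnd ℂ) (Complex.I ^ wt (odot c a))
        * χ (dotp c (f (x+a) + f x + odot a x)) := by
  rw [map_mul, conj_χ, quarter, map_mul, map_mul, conj_χ, map_pow, map_pow]
  have hI : (Complex.I ^ wt (odot c x)) * ((starRingEnd ℂ) Complex.I) ^ wt (odot c x) = 1 := by
    rw [← mul_pow, IconjI, one_pow]
  have hxca : dotp x (odot c a) = dotp c (odot a x) := by
    unfold dotp odot; exact Finset.sum_congr rfl (fun i _ => by ring)
  have hexp : ((dotp c (f x) + dotp u x) + (dotp c (f (x+a)) + dotp u (x+a))) + dotp x (odot c a)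
      = dotp u a + dotp c (f (x+a) + f x + odot a x) := by
    rw [dotp_add_right u x a, hxca, dotp_add_right c (f (x+a) + f x) (odot a x),
      dotp_add_right c (f (x+a)) (f x)]
    have h2 : (2 : ZMod 2) = 0 := rfl
    linear_combination (dotp u x) * h2
  have hχ : χ (dotp c (f x) + dotp u x) * χ (dotp c (f (x+a)) + dotp u (x+a)) * χ (dotp x (odot c a))
      = χ (dotp u a) * χ (dotp c (f (x+a) + f x + odot a x)) := by
    rw [← χ_add, ← χ_add, ← χ_add, hexp]
  calc (χ (dotp c (f x) + dotp u x) * Complex.I ^ wt (odot c x)) *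
        (χ (dotp c (f (x+a)) + dotp u (x+a)) *
          ((starRingEnd ℂ) Complex.I ^ wt (odot c x) * (starRingEnd ℂ) Complex.I ^ wt (odot c a)
            * χ (dotp x (odot c a))))
      = (χ (dotp c (f x) + dotp u x) * χ (dotp c (f (x+a)) + dotp u (x+a)) * χ (dotp x (odot c a)))
        * ((Complex.I ^ wt (odot c x)) * (starRingEnd ℂ) Complex.I ^ wt (odot c x))
        * (starRingEnd ℂ) Complex.I ^ wt (odot c a) := by ring
    _ = χ (dotp u a) * (starRingEnd ℂ) Complex.I ^ wt (odot c a)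
        * χ (dotp c (f (x+a) + f x + odot a x)) := by
        rw [hI, mul_one, hχ]; ring

def T (f : (Fin n → ZMod 2) → (Fin n → ZMod 2)) (c a : Fin n → ZMod 2) : ℂ :=
  ∑ x : Fin n → ZMod 2, χ (dotp c (f (x + a) + f x + odot a x))

lemma U_eq (f : (Fin n → ZMod 2) → (Fin n → ZMod 2)) (c u : Fin n → ZMod 2) :
    U (fun x => dotp c (f x)) c u
      = ∑ x : Fin n → ZMod 2, χ (dotp c (f x) + dotp u x) * Complex.I ^ wt (odot c x) := rfl

lemma keyA (f : (Fin n → ZMod 2) → (Fin n → ZMod 2)) (c u : Fin n → ZMod 2) :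
    U (fun x => dotp c (f x)) c u * (starRingEnd ℂ) (U (fun x => dotp c (f x)) c u)
      = ∑ a : Fin n → ZMod 2,
          χ (dotp u a) * (starRingEnd ℂ) (Complex.I ^ wt (odot c a)) * T f c a := by
  rw [U_eq, map_sum, Finset.sum_mul_sum]
  have step1 : ∀ x : Fin n → ZMod 2,
      ∑ y : Fin n → ZMod 2,
        (χ (dotp c (f x) + dotp u x) * Complex.I ^ wt (odot c x)) *
          (starRingEnd ℂ) (χ (dotp c (f y) + dotp u y) * Complex.I ^ wt (odot c y))
      = ∑ a : Fin n → ZMod 2,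
          χ (dotp u a) * (starRingEnd ℂ) (Complex.I ^ wt (odot c a))
            * χ (dotp c (f (x + a) + f x + odot a x)) := by
    intro x
    rw [← Fintype.sum_equiv (Equiv.addLeft x)
      (fun a => (χ (dotp c (f x) + dotp u x) * Complex.I ^ wt (odot c x)) *
          (starRingEnd ℂ) (χ (dotp c (f (x + a)) + dotp u (x + a)) * Complex.I ^ wt (odot c (x + a))))
      (fun y => (χ (dotp c (f x) + dotp u x) * Complex.I ^ wt (odot c x)) *
          (starRingEnd ℂ) (χ (dotp c (f y) + dotp u y) * Complex.I ^ wt (odot c y)))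
      (fun a => rfl)]
    exact Finset.sum_congr rfl (fun a _ => point f c u x a)
  calc (∑ x : Fin n → ZMod 2, ∑ y : Fin n → ZMod 2,
        (χ (dotp c (f x) + dotp u x) * Complex.I ^ wt (odot c x)) *
          (starRingEnd ℂ) (χ (dotp c (f y) + dotp u y) * Complex.I ^ wt (odot c y)))
      = ∑ x : Fin n → ZMod 2, ∑ a : Fin n → ZMod 2,
          χ (dotp u a) * (starRingEnd ℂ) (Complex.I ^ wt (odot c a))
            * χ (dotp c (f (x + a) + f x + odot a x)) :=
        Finset.sum_congr rfl (fun x _ => step1 x)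
    _ = ∑ a : Fin n → ZMod 2,
          χ (dotp u a) * (starRingEnd ℂ) (Complex.I ^ wt (odot c a)) * T f c a := by
        rw [Finset.sum_comm]
        refine Finset.sum_congr rfl (fun a _ => ?_)
        rw [T, Finset.mul_sum]

lemma T_zero (f : (Fin n → ZMod 2) → (Fin n → ZMod 2)) (c : Fin n → ZMod 2) :
    T f c 0 = (2:ℂ)^n := by
  have : ∀ x : Fin n → ZMod 2, dotp c (f (x + 0) + f x + odot 0 x) = 0 := by
    intro x
    rw [add_zero, odot_zero_left, add_zero]
    have : f x + f x = 0 := by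
      funext i; exact CharTwo.add_self_eq_zero _
    rw [this, dotp_zero_right]
  simp only [T, this, χ_zero]
  simp [Finset.card_univ, card_G]

lemma sum_χ_comp_bij (D : (Fin n → ZMod 2) → (Fin n → ZMod 2)) (hD : Function.Bijective D)
    (c : Fin n → ZMod 2) (hc : c ≠ 0) :
    ∑ x : Fin n → ZMod 2, χ (dotp c (D x)) = 0 := by
  rw [Fintype.sum_bijective D hD _ (fun y => χ (dotp c y)) (fun x => rfl)]
  simpa [hc] using orth c

lemma pow2_ne_zero : ((2:ℂ)^n) ≠ 0 := pow_ne_zero _ two_ne_zero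

lemma conjI_pow_ne_zero (w : ℕ) : ((starRingEnd ℂ) (Complex.I ^ w)) ≠ 0 := by
  simp [Complex.I_ne_zero, pow_ne_zero]

lemma add_eq_zero_iff_eq (p q : Fin n → ZMod 2) : p + q = 0 ↔ p = q := by
  constructor
  · intro h; funext i
    have := congrFun h i
    have h2 : ∀ a b : ZMod 2, a + b = 0 → a = b := by decide
    exact h2 _ _ this
  · rintro rfl; funext i; exact CharTwo.add_self_eq_zero _

lemma bij_of_balanced (D : (Fin n → ZMod 2) → (Fin n → ZMod 2))
    (h : ∀ c : Fin n → ZMod 2, c ≠ 0 → ∑ x : Fin n → ZMod 2, χ (dotp c (D x)) = 0) :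
    Function.Bijective D := by
  classical
  rw [Function.bijective_iff_existsUnique]
  intro v
  have key : ∀ w : Fin n → ZMod 2,
      (∑ c : Fin n → ZMod 2, χ (dotp c w)) = if w = 0 then (2:ℂ)^n else 0 := by
    intro w
    have : ∀ c : Fin n → ZMod 2, dotp c w = dotp w c := fun c => dotp_comm c w
    simp only [this]
    exact orth w
  have hcount :
      ∑ x : Fin n → ZMod 2, ∑ c : Fin n → ZMod 2, χ (dotp c (D x + v)) = (2:ℂ)^n := by
    rw [Finset.sum_comm]
    have inner : ∀ c : Fin n → ZMod 2,
        ∑ x : Fin n → ZMod 2, χ (dotp c (D x + v))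
          = χ (dotp c v) * ∑ x : Fin n → ZMod 2, χ (dotp c (D x)) := by
      intro c
      rw [Finset.mul_sum]
      refine Finset.sum_congr rfl (fun x _ => ?_)
      rw [dotp_add_right, χ_add]; ring
    rw [Finset.sum_congr rfl (fun c _ => inner c),
      Finset.sum_eq_single (0 : Fin n → ZMod 2)]
    · rw [dotp_zero_left, χ_zero, one_mul]
      have : ∀ x : Fin n → ZMod 2, dotp (0 : Fin n → ZMod 2) (D x) = 0 :=
        fun x => dotp_zero_left _
      simp only [this, χ_zero]
      simp [Finset.card_univ, card_G]
    · intro c _ hc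
      rw [h c hc, mul_zero]
    · simp
  have hsum2 : ∑ x : Fin n → ZMod 2, ∑ c : Fin n → ZMod 2, χ (dotp c (D x + v))
      = ((Finset.univ.filter (fun x => D x = v)).card : ℂ) * (2:ℂ)^n := by
    have : ∀ x : Fin n → ZMod 2,
        ∑ c : Fin n → ZMod 2, χ (dotp c (D x + v))
          = if D x = v then (2:ℂ)^n else 0 := by
      intro x
      rw [key (D x + v)]
      simp [add_eq_zero_iff_eq]
    rw [Finset.sum_congr rfl (fun x _ => this x), ← Finset.sum_filter,
      Finset.sum_const, nsmul_eq_mul]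
  have hcard : ((Finset.univ.filter (fun x => D x = v)).card : ℂ) * (2:ℂ)^n = (2:ℂ)^n := by
    rw [← hsum2, hcount]
  have hcard1 : (Finset.univ.filter (fun x => D x = v)).card = 1 := by
    have := mul_right_cancel₀ pow2_ne_zero (by rw [hcard, one_mul] :
      ((Finset.univ.filter (fun x => D x = v)).card : ℂ) * (2:ℂ)^n = 1 * (2:ℂ)^n)
    exact_mod_cast this
  obtain ⟨x, hx⟩ := Finset.card_eq_one.mp hcard1
  refine ⟨x, ?_, ?_⟩
  · have : x ∈ Finset.univ.filter (fun y => D y = v) := by rw [hx]; exact Finset.mem_singleton_self x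
    exact (Finset.mem_filter.mp this).2
  · intro y hy
    have : y ∈ Finset.univ.filter (fun z => D z = v) := by
      simp [hy]
    rw [hx] at this
    exact Finset.mem_singleton.mp this

lemma odot_zero_right (c : Fin n → ZMod 2) : odot c 0 = 0 := by
  funext i; simp [odot]

lemma abs_eq_of_mul_conj (z : ℂ) (h : z * (starRingEnd ℂ) z = (2:ℂ)^n) :
    ‖z‖ = (2:ℝ) ^ ((n:ℝ)/2) := by
  rw [Complex.mul_conj] at h
  have h2 : Complex.normSq z = (2:ℝ)^n := by
    have : ((Complex.normSq z : ℝ) : ℂ) = (((2:ℝ)^n : ℝ) : ℂ) := by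
      rw [h]; push_cast; ring
    exact_mod_cast this
  rw [Complex.norm_def, h2, Real.sqrt_eq_rpow, ← Real.rpow_natCast 2 n,
    ← Real.rpow_mul (by norm_num : (0:ℝ) ≤ 2)]
  congr 1
  ring

lemma mul_conj_eq_of_abs (z : ℂ) (h : ‖z‖ = (2:ℝ) ^ ((n:ℝ)/2)) :
    z * (starRingEnd ℂ) z = (2:ℂ)^n := by
  have h2 : Complex.normSq z = (2:ℝ)^n := by
    rw [← Complex.sq_norm, h, ← Real.rpow_natCast ((2:ℝ) ^ ((n:ℝ)/2)) 2,
      ← Real.rpow_mul (by positivity : (0:ℝ) ≤ 2), ← Real.rpow_natCast 2 n]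
    congr 1
    push_cast
    ring
  rw [Complex.mul_conj, h2]
  push_cast
  ring

lemma forward (f : (Fin n → ZMod 2) → (Fin n → ZMod 2))
    (hpl : ∀ a : Fin n → ZMod 2, a ≠ 0 →
        Function.Bijective (fun x => f (x + a) + f x + odot a x))
    (c : Fin n → ZMod 2) (hc : c ≠ 0) : IsCBent4 (fun x => dotp c (f x)) c := by
  intro u
  apply abs_eq_of_mul_conj
  rw [keyA]
  rw [Finset.sum_eq_single (0 : Fin n → ZMod 2)]
  · rw [dotp_zero_right, χ_zero, odot_zero_right, wt_zero, pow_zero, map_one, T_zero f c]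
    ring
  · intro a _ ha
    have hT : T f c a = 0 := sum_χ_comp_bij _ (hpl a ha) c hc
    rw [hT, mul_zero]
  · simp

lemma backward (f : (Fin n → ZMod 2) → (Fin n → ZMod 2))
    (hbent : ∀ c : Fin n → ZMod 2, c ≠ 0 → IsCBent4 (fun x => dotp c (f x)) c)
    (a : Fin n → ZMod 2) (ha : a ≠ 0) :
    Function.Bijective (fun x => f (x + a) + f x + odot a x) := by
  apply bij_of_balanced
  intro c hc
  suffices hT : T f c a = 0 by exact hT
  have hU2 : ∀ u : Fin n → ZMod 2,
      U (fun x => dotp c (f x)) c u * (starRingEnd ℂ) (U (fun x => dotp c (f x)) c u)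
        = (2:ℂ)^n := fun u => mul_conj_eq_of_abs _ (hbent c hc u)
  have hL : ∑ u : Fin n → ZMod 2,
      χ (dotp u a) * (U (fun x => dotp c (f x)) c u *
        (starRingEnd ℂ) (U (fun x => dotp c (f x)) c u)) = 0 := by
    simp only [hU2]
    rw [← Finset.sum_mul]
    have : ∑ u : Fin n → ZMod 2, χ (dotp u a) = 0 := by
      have heq : ∀ u : Fin n → ZMod 2, dotp u a = dotp a u := fun u => dotp_comm u a
      simp only [heq]
      simpa [ha] using orth a
    rw [this, zero_mul]
  have hR : ∑ u : Fin n → ZMod 2,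
      χ (dotp u a) * (U (fun x => dotp c (f x)) c u *
        (starRingEnd ℂ) (U (fun x => dotp c (f x)) c u))
      = ((starRingEnd ℂ) (Complex.I ^ wt (odot c a)) * T f c a) * (2:ℂ)^n := by
    have step : ∀ u : Fin n → ZMod 2,
        χ (dotp u a) * (U (fun x => dotp c (f x)) c u *
          (starRingEnd ℂ) (U (fun x => dotp c (f x)) c u))
        = ∑ b : Fin n → ZMod 2,
            ((starRingEnd ℂ) (Complex.I ^ wt (odot c b)) * T f c b) * χ (dotp (a + b) u) := by
      intro u
      rw [keyA, Finset.mul_sum]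
      refine Finset.sum_congr rfl (fun b _ => ?_)
      have : χ (dotp (a + b) u) = χ (dotp u a) * χ (dotp u b) := by
        rw [dotp_comm (a+b) u, dotp_add_right, χ_add]
      rw [this]
      ring
    rw [Finset.sum_congr rfl (fun u _ => step u), Finset.sum_comm]
    rw [Finset.sum_eq_single a]
    · rw [← Finset.mul_sum]
      have haa : a + a = 0 := (add_eq_zero_iff_eq a a).mpr rfl
      rw [haa]
      have : ∀ u : Fin n → ZMod 2, dotp (0 : Fin n → ZMod 2) u = 0 :=
        fun u => dotp_zero_left u
      simp only [this, χ_zero]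
      simp [Finset.card_univ, card_G]
    · intro b _ hb
      have hab : a + b ≠ 0 := by
        intro hcontra
        exact hb ((add_eq_zero_iff_eq a b).mp hcontra).symm
      rw [← Finset.mul_sum]
      have : ∑ u : Fin n → ZMod 2, χ (dotp (a + b) u) = 0 := by
        simpa [hab] using orth (a + b)
      rw [this, mul_zero]
    · simp
  have h0 : ((starRingEnd ℂ) (Complex.I ^ wt (odot c a)) * T f c a) * (2:ℂ)^n = 0 := by
    rw [← hR, hL]
  have h1 : (starRingEnd ℂ) (Complex.I ^ wt (odot c a)) * T f c a = 0 :=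
    by
      rcases mul_eq_zero.mp h0 with h | h
      · exact h
      · exact absurd h pow2_ne_zero
  rcases mul_eq_zero.mp h1 with h | h
  · exact absurd h (conjI_pow_ne_zero _)
  · exact h

end CB4

/-- `f : F_2^n → F_2^n` is a modified planar function iff for every nonzero `c`
the component function `f_c(x) = c·f(x)` is `c`-bent₄. -/
theorem modifiedPlanar_iff_components_cBent4 {n : ℕ}
    (f : (Fin n → ZMod 2) → (Fin n → ZMod 2)) :
    (∀ a : Fin n → ZMod 2, a ≠ 0 →
        Function.Bijective (fun x => f (x + a) + f x + odot a x)) ↔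
    (∀ c : Fin n → ZMod 2, c ≠ 0 → IsCBent4 (fun x => dotp c (f x)) c) :=
  ⟨fun hpl c hc => CB4.forward f hpl c hc, fun hb a ha => CB4.backward f hb a ha⟩
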